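/- Let k be a field of characteristic neither 2 nor 3, and let E: y^2 = x^3 + Ax + B be an elliptic curve over k with A ≠ 0, B ≠ 0, and with no k-rational 2-torsion point (i.e., x^3+Ax+B irreducible over k). If r is a root of x^3 + Ax + B in an algebraic closure, then s = −(B/(Ar))^2 is a root of x^3 + (x − B^2/A^3)^2, and k(r) = k(s). -/

import Mathlib

open Polynomial in
/-- Let `k` be a field of characteristic neither 2 nor 3, `E : y² = x³ + Ax + B` with
`A ≠ 0`, `B ≠ 0` and `x³ + Ax + B` irreducible over `k` (no rational 2-torsion). If `r` is a
root of `x³ + Ax + B` in an extension `K` (e.g. an algebraic closure), then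
`s = −(B/(Ar))²` is a root of `x³ + (x − B²/A³)²`, and `k(r) = k(s)`. -/
theorem stmt12 (k K : Type*) [Field k] [Field K] [Algebra k K]
    (h2 : (2 : k) ≠ 0) (h3 : (3 : k) ≠ 0)
    (A B : k) (hA : A ≠ 0) (hB : B ≠ 0)
    (hirr : Irreducible (X^3 + C A * X + C B))
    (r : K) (hr : r^3 + algebraMap k K A * r + algebraMap k K B = 0) :
    (-(algebraMap k K B / (algebraMap k K A * r))^2)^3 +
        (-(algebraMap k K B / (algebraMap k K A * r))^2 - algebraMap k K (B^2/A^3))^2 = 0 ∧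
      IntermediateField.adjoin k {r} =
        IntermediateField.adjoin k {-(algebraMap k K B / (algebraMap k K A * r))^2} := by
  set a : K := algebraMap k K A with ha_def
  set b : K := algebraMap k K B with hb_def
  have ha : a ≠ 0 := by
    rw [ha_def]; simpa using (algebraMap k K).injective.ne hA
  have hb : b ≠ 0 := by
    rw [hb_def]; simpa using (algebraMap k K).injective.ne hB
  have hr0 : r ≠ 0 := by
    rintro rfl
    exact hb (by simpa using hr)
  -- the polynomial
  set p : k[X] := X^3 + C A * X + C B with hp_def
  have pmonic : p.Monic := by
    rw [hp_def]; monicity!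
  have pdeg : p.natDegree = 3 := by
    rw [hp_def]; compute_degree!
  have haeval : aeval r p = 0 := by
    simp only [hp_def, map_add, map_mul, map_pow, aeval_X, aeval_C]
    exact hr
  have hint : IsIntegral k r := ⟨p, pmonic, by simpa [aeval_def] using haeval⟩
  have hmin : minpoly k r = p :=
    (minpoly.eq_of_irreducible_of_monic hirr haeval pmonic).symm
  -- first part
  have part1 : (-(b / (a * r))^2)^3 + (-(b / (a * r))^2 - algebraMap k K (B^2/A^3))^2 = 0 := by
    have hmap : algebraMap k K (B^2/A^3) = b^2 / a^3 := by
      rw [map_div₀, map_pow, map_pow]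
    rw [hmap]
    field_simp
    linear_combination (b^4 * (r^3 + a*r - b)) * hr
  refine ⟨part1, ?_⟩
  -- second part
  set s : K := -(b / (a * r))^2 with hs_def
  have hs_mem : s ∈ IntermediateField.adjoin k {r} := by
    have hrmem : r ∈ IntermediateField.adjoin k {r} :=
      IntermediateField.mem_adjoin_simple_self k r
    exact neg_mem (pow_mem (div_mem
      ((IntermediateField.adjoin k {r}).algebraMap_mem B)
      (mul_mem ((IntermediateField.adjoin k {r}).algebraMap_mem A) hrmem)) 2)
  have hle : IntermediateField.adjoin k {s} ≤ IntermediateField.adjoin k {r} :=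
    IntermediateField.adjoin_le_iff.mpr (Set.singleton_subset_iff.mpr hs_mem)
  have hfd : FiniteDimensional k (IntermediateField.adjoin k {r}) :=
    IntermediateField.adjoin.finiteDimensional hint
  have hfr : Module.finrank k (IntermediateField.adjoin k {r}) = 3 := by
    rw [IntermediateField.adjoin.finrank hint, hmin, pdeg]
  -- s is integral, and its minpoly degree divides 3
  set s' : IntermediateField.adjoin k {r} := ⟨s, hs_mem⟩ with hs'_def
  have hs'int : IsIntegral k s' := IsIntegral.of_finite k s'
  have hsint : IsIntegral k s := by
    have := hs'int.algebraMap (B := K)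
    simpa using this
  have hmineq : minpoly k s = minpoly k s' := by
    have : s = algebraMap (IntermediateField.adjoin k {r}) K s' := rfl
    rw [this, minpoly.algebraMap_eq (algebraMap (IntermediateField.adjoin k {r}) K).injective]
  have hdvd : (minpoly k s).natDegree ∣ 3 := by
    rw [hmineq, ← hfr]
    exact minpoly.degree_dvd hs'int
  have hpos : 0 < (minpoly k s).natDegree := minpoly.natDegree_pos hsint
  have hd : (minpoly k s).natDegree = 1 ∨ (minpoly k s).natDegree = 3 :=
    (Nat.Prime.eq_one_or_self_of_dvd (by norm_num) _ hdvd).imp id id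
  rcases hd with hd1 | hd3
  · -- degree 1: s ∈ k, contradiction
    exfalso
    have hdeg1 : (minpoly k s).degree = 1 := by
      rw [degree_eq_natDegree (minpoly.ne_zero hsint), hd1]; rfl
    obtain ⟨c, hc⟩ := (minpoly.degree_eq_one_iff).mp hdeg1
    have hs0 : s ≠ 0 := by
      rw [hs_def]
      exact neg_ne_zero.mpr (pow_ne_zero _ (div_ne_zero hb (mul_ne_zero ha hr0)))
    have hc0 : c ≠ 0 := by
      rintro rfl
      rw [map_zero] at hc
      exact hs0 hc.symm
    -- r² = algebraMap of -(B²/(A²*c))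
    have hr2 : r^2 = algebraMap k K (-(B^2/(A^2*c))) := by
      have hc'0 : algebraMap k K c ≠ 0 := fun h => hc0 ((algebraMap k K).injective (by rw [h, map_zero]))
      have hc' : algebraMap k K c = -(b/(a*r))^2 := by rw [hc, hs_def]
      rw [map_neg, map_div₀, map_pow, map_mul, map_pow, ← ha_def, ← hb_def]
      field_simp
      field_simp at hc'
      linear_combination hc'
    set q : k[X] := X^2 - C (-(B^2/(A^2*c))) with hq_def
    have hqaeval : aeval r q = 0 := by
      simp only [hq_def, map_sub, map_pow, aeval_X, aeval_C]
      rw [hr2]; ring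
    have hqne : q ≠ 0 := by
      have : q.natDegree = 2 := by rw [hq_def]; compute_degree!
      intro h; rw [h] at this; simp at this
    have hqdeg : q.natDegree = 2 := by rw [hq_def]; compute_degree!
    have : (minpoly k r).natDegree ≤ 2 := by
      rw [← hqdeg]
      exact natDegree_le_of_dvd (minpoly.dvd k r hqaeval) hqne
    rw [hmin, pdeg] at this
    omega
  · -- degree 3: equal fields
    have hfs : Module.finrank k (IntermediateField.adjoin k {s}) = 3 := by
      rw [IntermediateField.adjoin.finrank hsint, hd3]
    exact (IntermediateField.eq_of_le_of_finrank_eq hle (by rw [hfs, hfr])).symm
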